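/- Let p be a prime, a ≥ 1, and let ρ = (ρ_1,...,ρ_m) be a composition whose parts all satisfy ρ_i < p^a. Then for any integer N ≥ |ρ| + 2p^a, the multinomial coefficients satisfy the congruence: C(N − p^a; N − |ρ| − p^a, ρ_1, ..., ρ_m) ≡ C(N − 2p^a; N − |ρ| − 2p^a, ρ_1, ..., ρ_m) (mod p). -/
import Mathlib

/-- The multinomial coefficient `C(n; n − |ρ|, ρ₁, …, ρ_m) = n! / ((n − |ρ|)! ρ₁! ⋯ ρ_m!)`,
choosing the parts of the composition `ρ` (and the remainder `n − |ρ|`) from `n`. -/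
def multinomC (n : ℕ) (ρ : List ℕ) : ℕ :=
  Nat.multinomial Finset.univ (Fin.cons (n - ρ.sum) ρ.get)

open scoped Nat

/-- Peeling off the head of a `Fin.cons` in a multinomial coefficient. -/
lemma multinomial_univ_cons {m : ℕ} (b : ℕ) (g : Fin m → ℕ) :
    Nat.multinomial Finset.univ (Fin.cons b g) =
      (b + ∑ i, g i).choose b * Nat.multinomial Finset.univ g := by
  have h1 := Nat.multinomial_spec Finset.univ (Fin.cons b g : Fin (m+1) → ℕ)
  have h2 := Nat.multinomial_spec Finset.univ g
  rw [Fin.prod_univ_succ, Fin.sum_univ_succ] at h1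
  simp only [Fin.cons_zero, Fin.cons_succ] at h1
  have h3 : (b + ∑ i, g i).choose b * (Nat.factorial b * Nat.factorial (∑ i, g i)) = (b + ∑ i, g i)! := by
    rw [← Nat.add_choose_mul_factorial_mul_factorial b (∑ i, g i), mul_assoc, Nat.choose_symm_add]
  have hpos : 0 < Nat.factorial b * ∏ i, Nat.factorial (g i) := by positivity
  apply Nat.eq_of_mul_eq_mul_left hpos
  calc Nat.factorial b * (∏ i, (g i)!) * Nat.multinomial Finset.univ (Fin.cons b g)
      = (b + ∑ i, g i)! := h1
    _ = (b + ∑ i, g i).choose b * (Nat.factorial b * Nat.factorial (∑ i, g i)) := h3.symm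
    _ = (b + ∑ i, g i).choose b * (Nat.factorial b * ((∏ i, (g i)!) * Nat.multinomial Finset.univ g)) := by
        rw [h2]
    _ = Nat.factorial b * (∏ i, (g i)!) *
        ((b + ∑ i, g i).choose b * Nat.multinomial Finset.univ g) := by ring

/-- Swapping the first two entries of a multinomial coefficient. -/
lemma multinomial_univ_swap {m : ℕ} (b c : ℕ) (g : Fin m → ℕ) :
    Nat.multinomial Finset.univ (Fin.cons b (Fin.cons c g)) =
      Nat.multinomial Finset.univ (Fin.cons c (Fin.cons b g)) := by
  unfold Nat.multinomial
  rw [Fin.sum_univ_succ, Fin.sum_univ_succ, Fin.sum_univ_succ, Fin.sum_univ_succ,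
    Fin.prod_univ_succ, Fin.prod_univ_succ, Fin.prod_univ_succ, Fin.prod_univ_succ]
  simp only [Fin.cons_zero, Fin.cons_succ]
  ring_nf

/-- `multinomC` peels off the head of the composition as a binomial coefficient. -/
lemma multinomC_cons (n r : ℕ) (ρ : List ℕ) (h : r + ρ.sum ≤ n) :
    multinomC n (r :: ρ) = n.choose r * multinomC (n - r) ρ := by
  unfold multinomC
  have hget : (r :: ρ).get = Fin.cons r ρ.get := by
    funext i
    refine Fin.cases ?_ (fun j => ?_) i <;> simp
  have hsum : (∑ i, ρ.get i) = ρ.sum := by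
    conv_rhs => rw [← List.ofFn_get ρ]
    rw [List.sum_ofFn]
  have hs : (r :: ρ).sum = r + ρ.sum := by simp
  rw [hs, hget, multinomial_univ_swap, multinomial_univ_cons, multinomial_univ_cons]
  rw [Fin.sum_univ_succ, Fin.cons_zero]
  simp only [Fin.cons_succ, hsum]
  have e1 : r + (n - (r + ρ.sum) + ρ.sum) = n := by omega
  have e2 : n - (r + ρ.sum) = n - r - ρ.sum := by omega
  rw [e1, e2, multinomial_univ_cons]
  simp only [hsum]

/-- Vandermonde-type congruence for binomial coefficients: adding `p ^ a` to the
top does not change the value mod `p`, provided the bottom is `< p ^ a`. -/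
lemma choose_add_pow_modeq (p a : ℕ) (hp : p.Prime) (x r : ℕ) (hr : r < p ^ a) :
    (x + p ^ a).choose r ≡ x.choose r [MOD p] := by
  haveI : Fact p.Prime := ⟨hp⟩
  rw [← ZMod.natCast_eq_natCast_iff]
  push_cast [Nat.add_choose_eq]
  rw [Finset.sum_eq_single (r, 0)]
  · simp
  · rintro ⟨i, j⟩ hmem hne
    have hij : i + j = r := Finset.HasAntidiagonal.mem_antidiagonal.mp hmem
    have hj : j ≠ 0 := by
      rintro rfl
      exact hne (by simpa using hij)
    have hdvd : p ∣ (p ^ a).choose j :=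
      hp.dvd_choose_pow hj (by omega)
    have : ((p ^ a).choose j : ZMod p) = 0 := by
      exact_mod_cast (ZMod.natCast_eq_zero_iff _ _).mpr hdvd
    simp [this]
  · intro h
    exact absurd (Finset.HasAntidiagonal.mem_antidiagonal.mpr (by omega)) h

/-- The main congruence, with `M = N - 2p^a`. -/
lemma multinomC_add_pow_modeq (p a : ℕ) (hp : p.Prime)
    (ρ : List ℕ) (hρ : ∀ x ∈ ρ, x < p ^ a) (M : ℕ) (hM : ρ.sum ≤ M) :
    multinomC (M + p ^ a) ρ ≡ multinomC M ρ [MOD p] := by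
  induction ρ generalizing M with
  | nil =>
    unfold multinomC
    simp only [List.sum_nil, Nat.sub_zero]
    have h : ∀ k : ℕ, Nat.multinomial Finset.univ (Fin.cons k (List.nil.get)) = 1 := by
      intro k
      rw [multinomial_univ_cons]
      simp [Nat.multinomial]
    rw [h, h]
  | cons r ρ ih =>
    have hr : r < p ^ a := hρ r (by simp)
    have hsum : r + ρ.sum ≤ M := by simpa using hM
    rw [multinomC_cons _ _ _ (by omega), multinomC_cons _ _ _ (by omega)]
    have e : M + p ^ a - r = (M - r) + p ^ a := by omega
    rw [e]
    exact Nat.ModEq.mul (choose_add_pow_modeq p a hp M r hr)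
      (ih (fun x hx => hρ x (by simp [hx])) (M - r) (by omega))

theorem multinomial_congruence_mod_p (p a : ℕ) (hp : p.Prime) (ha : 1 ≤ a)
    (ρ : List ℕ) (hρ : ∀ x ∈ ρ, x < p ^ a) (N : ℕ) (hN : ρ.sum + 2 * p ^ a ≤ N) :
    multinomC (N - p ^ a) ρ ≡ multinomC (N - 2 * p ^ a) ρ [MOD p] := by
  have e : N - p ^ a = (N - 2 * p ^ a) + p ^ a := by omega
  rw [e]
  exact multinomC_add_pow_modeq p a hp ρ hρ (N - 2 * p ^ a) (by omega)
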